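/- arXiv:2103.12516 — 3 statements merged into one kernel-verified Lean document; each statement's English description precedes it below -/
import Mathlib

section
/- Let T > 0, V > 0 and θ > 0, and let (R_t)_{t≥0} be independent, identically distributed nonnegative real random variables on a probability space. Define the cumulative arrival process A(j,i) = V·(i−j)·T, the cumulative service process C(j,i) = Σ_{t=j}^{i−1} R_t·T, and the departure process A*(0,m) = min_{0≤j≤m} ( A(0,j) + C(j,m) ). If the stability condition V ≤ −ln E[e^{−θ R_0 T}] / (θ T) holds, then for every natural number i and every natural number k, Pr{ A(0,i) > A*(0,i+k) } ≤ ( E[e^{−θ R_0 T}] )^k. -/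
open MeasureTheory ProbabilityTheory

section Aux

variable {Ω : Type*} [MeasurableSpace Ω] (μ : Measure Ω) [IsProbabilityMeasure μ]

/-- A simple Markov-type inequality: if `1 ≤ Z ω` implies `1 ≤ W ω`, with `W` nonnegative
and integrable, then `μ {1 ≤ Z} ≤ ∫ W`. -/
private lemma markov_aux {Z W : Ω → ℝ} (hZm : Measurable Z) (hWint : Integrable W μ)
    (hW1 : ∀ ω, 1 ≤ Z ω → 1 ≤ W ω) (hW0 : ∀ ω, 0 ≤ W ω) :
    (μ {ω | 1 ≤ Z ω}).toReal ≤ ∫ ω, W ω ∂μ := by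
  have hs : MeasurableSet {ω | 1 ≤ Z ω} := measurableSet_le measurable_const hZm
  have h1 : (μ {ω | 1 ≤ Z ω}).toReal
      = ∫ ω, Set.indicator {ω | 1 ≤ Z ω} (fun _ => (1 : ℝ)) ω ∂μ := by
    rw [integral_indicator_const (1 : ℝ) hs]; simp; rfl
  rw [h1]
  refine integral_mono ((integrable_const (1 : ℝ)).indicator hs) hWint ?_
  intro ω
  by_cases h : ω ∈ {ω | 1 ≤ Z ω}
  · rw [Set.indicator_of_mem h]; exact hW1 ω h
  · rw [Set.indicator_of_notMem h]; exact hW0 ω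

/-- The expectation of a product of independent `[0,1]`-valued random variables over an
interval, each of mean `φ`, is `φ ^ length`. -/
private lemma prod_integral_aux (f : ℕ → Ω → ℝ) (hmeas : ∀ t, Measurable (f t))
    (h0 : ∀ t ω, 0 ≤ f t ω) (hle1 : ∀ t ω, f t ω ≤ 1)
    (hindep : iIndepFun f μ)
    (φ : ℝ) (hφt : ∀ t, ∫ ω, f t ω ∂μ = φ) (a : ℕ) :
    ∀ j : ℕ, ∫ ω, ∏ t ∈ Finset.Ico a (a + j), f t ω ∂μ = φ ^ j := by
  intro j
  induction j with
  | zero => simp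
  | succ j ih =>
    have hnotmem : (a + j) ∉ Finset.Ico a (a + j) := by simp
    have hXY : IndepFun (∏ t ∈ Finset.Ico a (a + j), f t) (f (a + j)) μ :=
      hindep.indepFun_finsetProd_of_notMem hmeas hnotmem
    have hXm : Measurable (∏ t ∈ Finset.Ico a (a + j), f t) := by
      have h1 : (∏ t ∈ Finset.Ico a (a + j), f t)
          = fun ω => ∏ t ∈ Finset.Ico a (a + j), f t ω :=
        funext fun ω => Finset.prod_apply ω (Finset.Ico a (a + j)) f
      rw [h1]
      exact Finset.measurable_prod _ (fun t _ => hmeas t)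
    have hmul := hXY.integral_mul_eq_mul_integral hXm.aestronglyMeasurable (hmeas (a + j)).aestronglyMeasurable
    have h1 : ∀ ω, ∏ t ∈ Finset.Ico a (a + (j + 1)), f t ω
        = ((∏ t ∈ Finset.Ico a (a + j), f t) * f (a + j)) ω := by
      intro ω
      rw [Pi.mul_apply, Finset.prod_apply, show a + (j + 1) = (a + j) + 1 from rfl,
        Finset.prod_Ico_succ_top (Nat.le_add_right a j)]
    calc ∫ ω, ∏ t ∈ Finset.Ico a (a + (j + 1)), f t ω ∂μ
        = ∫ ω, ((∏ t ∈ Finset.Ico a (a + j), f t) * f (a + j)) ω ∂μ :=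
          integral_congr_ae (Filter.Eventually.of_forall h1)
      _ = (∫ ω, (∏ t ∈ Finset.Ico a (a + j), f t) ω ∂μ) * ∫ ω, f (a + j) ω ∂μ := hmul
      _ = φ ^ j * φ := by
          rw [hφt (a + j), ← ih]
          congr 1
          exact integral_congr_ae (Filter.Eventually.of_forall fun ω => by
            rw [Finset.prod_apply])
      _ = φ ^ (j + 1) := by ring

/-- Finite-horizon Ville-type inequality for products of independent `(0,1]`-valued random
variables, proved by peeling one independent factor at a time. -/
private lemma ville_aux (f : ℕ → Ω → ℝ) (hmeas : ∀ t, Measurable (f t))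
    (hpos : ∀ t ω, 0 < f t ω) (hle1 : ∀ t ω, f t ω ≤ 1)
    (hindep : iIndepFun f μ)
    (φ c : ℝ) (hφt : ∀ t, ∫ ω, f t ω ∂μ = φ) (hc : 0 ≤ c) (hφc : φ * c ≤ 1) (N : ℕ) :
    ∀ m a, m ≤ a → a ≤ N → ∀ B : ℝ, ∀ g : (↥(Finset.Ico a N) → ℝ) → ℝ,
      Measurable g → (∀ v, 0 ≤ g v) → (∀ v, g v ≤ B) →
      (μ {ω | ∃ b, a - m ≤ b ∧ b ≤ a ∧
        1 ≤ g (fun t => f t.1 ω) * (c ^ (a - b) * ∏ t ∈ Finset.Ico b a, f t ω)}).toReal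
        ≤ ∫ ω, g (fun t => f t.1 ω) ∂μ := by
  intro m
  induction m with
  | zero =>
    intro a hma haN B g hg hg0 hgB
    have hZm : Measurable (fun ω => g (fun t : ↥(Finset.Ico a N) => f t.1 ω)) :=
      hg.comp (measurable_pi_lambda _ fun t => hmeas t.1)
    have hset : {ω | ∃ b, a - 0 ≤ b ∧ b ≤ a ∧
        1 ≤ g (fun t : ↥(Finset.Ico a N) => f t.1 ω) * (c ^ (a - b) * ∏ t ∈ Finset.Ico b a, f t ω)}
        = {ω | 1 ≤ g (fun t : ↥(Finset.Ico a N) => f t.1 ω)} := by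
      ext ω
      simp only [Set.mem_setOf_eq]
      constructor
      · rintro ⟨b, hb1, hb2, hb3⟩
        have hba : b = a := by omega
        subst hba
        simpa using hb3
      · intro h
        exact ⟨a, by omega, le_refl a, by simpa using h⟩
    rw [hset]
    refine markov_aux μ hZm ?_ (fun ω h => h) (fun ω => hg0 _)
    exact Integrable.mono' (integrable_const B) hZm.aestronglyMeasurable
      (Filter.Eventually.of_forall fun ω => by
        rw [Real.norm_eq_abs, abs_of_nonneg (hg0 _)]; exact hgB _)
  | succ m ih =>
    intro a hma haN B g hg hg0 hgB
    obtain ⟨a', rfl⟩ : ∃ a', a = a' + 1 := ⟨a - 1, by omega⟩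
    have ha'N : a' ≤ N := by omega
    have hmem : ∀ t : ↥(Finset.Ico (a' + 1) N), t.1 ∈ Finset.Ico a' N := fun t => by
      have := t.2; simp only [Finset.mem_Ico] at this ⊢; omega
    have ha'mem : a' ∈ Finset.Ico a' N := Finset.mem_Ico.mpr ⟨le_refl _, by omega⟩
    set res : (↥(Finset.Ico a' N) → ℝ) → (↥(Finset.Ico (a' + 1) N) → ℝ) :=
      fun v t => v ⟨t.1, hmem t⟩ with hres
    have hresm : Measurable res := measurable_pi_lambda _ fun t => measurable_pi_apply _
    set Z : Ω → ℝ := fun ω => g (fun t => f t.1 ω) with hZdef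
    have hZm : Measurable Z := hg.comp (measurable_pi_lambda _ fun t => hmeas t.1)
    have hZ0 : ∀ ω, 0 ≤ Z ω := fun ω => hg0 _
    have hZB : ∀ ω, Z ω ≤ B := fun ω => hgB _
    set X : Ω → ℝ := fun ω => if Z ω < 1 then Z ω else 0 with hXdef
    set X2 : Ω → ℝ := fun ω => if Z ω < 1 then 0 else Z ω with hX2def
    set Y : Ω → ℝ := fun ω => c * f a' ω with hYdef
    have hXm : Measurable X := Measurable.ite (measurableSet_lt hZm measurable_const)
      hZm measurable_const
    have hX2m : Measurable X2 := Measurable.ite (measurableSet_lt hZm measurable_const)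
      measurable_const hZm
    have hB0 : 0 ≤ B := le_trans (hg0 (fun _ => 0)) (hgB _)
    have hXint : Integrable X μ := Integrable.mono' (integrable_const B)
      hXm.aestronglyMeasurable (Filter.Eventually.of_forall fun ω => by
        simp only [hXdef, Real.norm_eq_abs]
        split
        · rw [abs_of_nonneg (hZ0 ω)]; exact hZB ω
        · simpa using hB0)
    have hX2int : Integrable X2 μ := Integrable.mono' (integrable_const B)
      hX2m.aestronglyMeasurable (Filter.Eventually.of_forall fun ω => by
        simp only [hX2def, Real.norm_eq_abs]
        split
        · simpa using hB0
        · rw [abs_of_nonneg (hZ0 ω)]; exact hZB ω)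
    -- the function for the induction step
    set g' : (↥(Finset.Ico a' N) → ℝ) → ℝ :=
      fun v => (if g (res v) < 1 then g (res v) else 0)
        * (c * max 0 (min (v ⟨a', ha'mem⟩) 1)) with hg'def
    have hφ1m : Measurable (fun u : ↥(Finset.Ico (a' + 1) N) → ℝ =>
        if g u < 1 then g u else 0) :=
      Measurable.ite (measurableSet_lt hg measurable_const) hg measurable_const
    have hg'm : Measurable g' :=
      (hφ1m.comp hresm).mul (measurable_const.mul
        (measurable_const.max ((measurable_pi_apply _).min measurable_const)))
    have hg'0 : ∀ v, 0 ≤ g' v := fun v => by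
      simp only [hg'def]
      apply mul_nonneg
      · split
        · exact hg0 _
        · exact le_refl 0
      · exact mul_nonneg hc (le_max_left 0 _)
    have hg'B : ∀ v, g' v ≤ c := fun v => by
      simp only [hg'def]
      have h1 : (if g (res v) < 1 then g (res v) else 0) ≤ 1 := by
        split
        · linarith
        · exact zero_le_one
      have h2 : c * max 0 (min (v ⟨a', ha'mem⟩) 1) ≤ c :=
        mul_le_of_le_one_right hc (max_le zero_le_one (min_le_right _ _))
      have h2' : 0 ≤ c * max 0 (min (v ⟨a', ha'mem⟩) 1) :=
        mul_nonneg hc (le_max_left 0 _)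
      calc (if g (res v) < 1 then g (res v) else 0)
            * (c * max 0 (min (v ⟨a', ha'mem⟩) 1)) ≤ 1 * c :=
          mul_le_mul h1 h2 h2' zero_le_one
        _ = c := one_mul c
    -- evaluation of g' along the process
    have hZ'' : ∀ ω, g' (fun t : ↥(Finset.Ico a' N) => f t.1 ω) = X ω * Y ω := by
      intro ω
      simp only [hg'def, hXdef, hYdef, hZdef, hres]
      rw [min_eq_left (hle1 a' ω), max_eq_right (hpos a' ω).le]
    -- independence and factorization of the integral
    have hdisj : Disjoint (Finset.Ico (a' + 1) N) ({a'} : Finset ℕ) := by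
      rw [Finset.disjoint_singleton_right]; simp
    have hbase := hindep.indepFun_finset (Finset.Ico (a' + 1) N) {a'} hdisj hmeas
    have hφ2m : Measurable (fun w : ↥({a'} : Finset ℕ) → ℝ =>
        c * w ⟨a', Finset.mem_singleton_self a'⟩) :=
      measurable_const.mul (measurable_pi_apply _)
    have hXY : IndepFun X Y μ := hbase.comp hφ1m hφ2m
    have hYm : Measurable Y := measurable_const.mul (hmeas a')
    have hmul := hXY.integral_mul_eq_mul_integral hXm.aestronglyMeasurable hYm.aestronglyMeasurable
    have hIY : ∫ ω, Y ω ∂μ = c * φ := by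
      simp only [hYdef]
      rw [integral_const_mul, hφt a']
    have hIX0 : 0 ≤ ∫ ω, X ω ∂μ := integral_nonneg fun ω => by
      simp only [hXdef]
      split
      · exact hZ0 ω
      · exact le_refl 0
    have hIg' : ∫ ω, g' (fun t : ↥(Finset.Ico a' N) => f t.1 ω) ∂μ ≤ ∫ ω, X ω ∂μ := by
      have he : ∫ ω, g' (fun t : ↥(Finset.Ico a' N) => f t.1 ω) ∂μ = ∫ ω, (X * Y) ω ∂μ :=
        integral_congr_ae (Filter.Eventually.of_forall fun ω =>
          (hZ'' ω).trans (Pi.mul_apply X Y ω).symm)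
      rw [he, hmul, hIY]
      have hcφ : c * φ ≤ 1 := by rw [mul_comm]; exact hφc
      exact mul_le_of_le_one_right hIX0 hcφ
    -- event inclusion
    have hincl : {ω | ∃ b, (a' + 1) - (m + 1) ≤ b ∧ b ≤ a' + 1 ∧
        1 ≤ Z ω * (c ^ ((a' + 1) - b) * ∏ t ∈ Finset.Ico b (a' + 1), f t ω)}
        ⊆ {ω | 1 ≤ Z ω} ∪ {ω | ∃ b, a' - m ≤ b ∧ b ≤ a' ∧
          1 ≤ g' (fun t : ↥(Finset.Ico a' N) => f t.1 ω)
            * (c ^ (a' - b) * ∏ t ∈ Finset.Ico b a', f t ω)} := by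
      rintro ω ⟨b, hb1, hb2, hb3⟩
      by_cases h1 : 1 ≤ Z ω
      · exact Or.inl h1
      · push_neg at h1
        right
        have hba' : b ≤ a' := by
          rcases Nat.lt_or_ge b (a' + 1) with h | h
          · omega
          · exfalso
            have hba : b = a' + 1 := le_antisymm hb2 h
            subst hba
            simp only [Nat.sub_self, pow_zero, Finset.Ico_self, Finset.prod_empty,
              one_mul, mul_one] at hb3
            linarith
        refine ⟨b, by omega, hba', ?_⟩
        rw [hZ'' ω]
        have hXeq : X ω = Z ω := if_pos h1
        rw [hXeq]
        have e1 : (a' + 1) - b = (a' - b) + 1 := by omega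
        have e2 : ∏ t ∈ Finset.Ico b (a' + 1), f t ω
            = (∏ t ∈ Finset.Ico b a', f t ω) * f a' ω :=
          Finset.prod_Ico_succ_top hba' _
        have hYeq : Y ω = c * f a' ω := rfl
        rw [hYeq]
        calc (1 : ℝ) ≤ Z ω * (c ^ ((a' + 1) - b) * ∏ t ∈ Finset.Ico b (a' + 1), f t ω) := hb3
          _ = Z ω * (c * f a' ω) * (c ^ (a' - b) * ∏ t ∈ Finset.Ico b a', f t ω) := by
              rw [e1, e2, pow_succ]; ring
    -- Markov bound on the first part
    have hmarkov : (μ {ω | 1 ≤ Z ω}).toReal ≤ ∫ ω, X2 ω ∂μ :=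
      markov_aux μ hZm hX2int
        (fun ω h => by simp only [hX2def]; rw [if_neg (not_lt.mpr h)]; exact h)
        (fun ω => by
          simp only [hX2def]
          split
          · exact le_refl 0
          · exact hZ0 ω)
    have hih := ih a' (by omega) ha'N c g' hg'm hg'0 hg'B
    have hsum : ∫ ω, X2 ω ∂μ + ∫ ω, X ω ∂μ = ∫ ω, Z ω ∂μ := by
      rw [← integral_add hX2int hXint]
      refine integral_congr_ae (Filter.Eventually.of_forall fun ω => ?_)
      simp only [hX2def, hXdef, Pi.add_apply]
      split <;> ring
    show (μ {ω | ∃ b, (a' + 1) - (m + 1) ≤ b ∧ b ≤ a' + 1 ∧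
        1 ≤ Z ω * (c ^ ((a' + 1) - b) * ∏ t ∈ Finset.Ico b (a' + 1), f t ω)}).toReal
      ≤ ∫ ω, Z ω ∂μ
    calc (μ {ω | ∃ b, (a' + 1) - (m + 1) ≤ b ∧ b ≤ a' + 1 ∧
          1 ≤ Z ω * (c ^ ((a' + 1) - b) * ∏ t ∈ Finset.Ico b (a' + 1), f t ω)}).toReal
        ≤ (μ ({ω | 1 ≤ Z ω} ∪ {ω | ∃ b, a' - m ≤ b ∧ b ≤ a' ∧
            1 ≤ g' (fun t : ↥(Finset.Ico a' N) => f t.1 ω)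
              * (c ^ (a' - b) * ∏ t ∈ Finset.Ico b a', f t ω)})).toReal :=
          ENNReal.toReal_mono (measure_ne_top _ _) (measure_mono hincl)
      _ ≤ (μ {ω | 1 ≤ Z ω}).toReal + (μ {ω | ∃ b, a' - m ≤ b ∧ b ≤ a' ∧
            1 ≤ g' (fun t : ↥(Finset.Ico a' N) => f t.1 ω)
              * (c ^ (a' - b) * ∏ t ∈ Finset.Ico b a', f t ω)}).toReal := by
          rw [← ENNReal.toReal_add (measure_ne_top _ _) (measure_ne_top _ _)]
          exact ENNReal.toReal_mono
            (ENNReal.add_ne_top.mpr ⟨measure_ne_top _ _, measure_ne_top _ _⟩)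
            (measure_union_le _ _)
      _ ≤ ∫ ω, X2 ω ∂μ + ∫ ω, X ω ∂μ :=
          add_le_add hmarkov (le_trans hih hIg')
      _ = ∫ ω, Z ω ∂μ := hsum

end Aux

/-- Theorem 1 of the paper: statistical delay-violation bound. If the video coding
rate `V` satisfies the stability condition w.r.t. the effective capacity with QoS
exponent `θ`, then the probability that the arrivals up to block `i` exceed the
departures up to block `i + k` is bounded by `(E[e^{-θ R₀ T}])^k`. -/
theorem delay_violation_bound
    {Ω : Type*} [MeasurableSpace Ω] (μ : Measure Ω) [IsProbabilityMeasure μ]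
    (T V θ : ℝ) (hT : 0 < T) (hV : 0 < V) (hθ : 0 < θ)
    (R : ℕ → Ω → ℝ)
    (hRmeas : ∀ t, Measurable (R t))
    (hRnonneg : ∀ t ω, 0 ≤ R t ω)
    (hindep : iIndepFun R μ)
    (hident : ∀ t, IdentDistrib (R t) (R 0) μ μ)
    (A : ℕ → ℕ → ℝ) (hA : ∀ j i, A j i = V * ((i : ℝ) - (j : ℝ)) * T)
    (C : ℕ → ℕ → Ω → ℝ) (hC : ∀ j i ω, C j i ω = ∑ t ∈ Finset.Ico j i, R t ω * T)
    (Astar : ℕ → Ω → ℝ)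
    (hAstar : ∀ m ω, Astar m ω =
      (Finset.range (m + 1)).inf' Finset.nonempty_range_add_one (fun j => A 0 j + C j m ω))
    (hstable : V ≤ - Real.log (∫ ω, Real.exp (-θ * R 0 ω * T) ∂μ) / (θ * T)) :
    ∀ i k : ℕ,
      (μ {ω | A 0 i > Astar (i + k) ω}).toReal ≤
        (∫ ω, Real.exp (-θ * R 0 ω * T) ∂μ) ^ k := by
  intro i k
  set φ : ℝ := ∫ ω, Real.exp (-θ * R 0 ω * T) ∂μ with hφdef
  set f : ℕ → Ω → ℝ := fun t ω => Real.exp (-θ * R t ω * T) with hfdef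
  set c : ℝ := Real.exp (θ * V * T) with hcdef
  have hgm : Measurable (fun x : ℝ => Real.exp (-θ * x * T)) :=
    Real.measurable_exp.comp ((measurable_id.const_mul (-θ)).mul_const T)
  have hfmeas : ∀ t, Measurable (f t) := fun t => hgm.comp (hRmeas t)
  have hfpos : ∀ t ω, 0 < f t ω := fun t ω => Real.exp_pos _
  have hfle1 : ∀ t ω, f t ω ≤ 1 := fun t ω => by
    have h0 : -θ * R t ω * T ≤ 0 := by
      nlinarith [mul_nonneg (mul_nonneg hθ.le (hRnonneg t ω)) hT.le]
    calc f t ω = Real.exp (-θ * R t ω * T) := rfl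
      _ ≤ Real.exp 0 := Real.exp_le_exp.mpr h0
      _ = 1 := Real.exp_zero
  have hfind : iIndepFun f μ :=
    hindep.comp (fun _ x => Real.exp (-θ * x * T)) (fun _ => hgm)
  have hφt : ∀ t, ∫ ω, f t ω ∂μ = φ := fun t =>
    ((hident t).comp hgm).integral_eq
  have hfint : Integrable (f 0) μ := Integrable.mono' (integrable_const 1)
    (hfmeas 0).aestronglyMeasurable (Filter.Eventually.of_forall fun ω => by
      rw [Real.norm_eq_abs, abs_of_nonneg (hfpos 0 ω).le]; exact hfle1 0 ω)
  have hφpos : 0 < φ := by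
    rw [hφdef]
    rw [integral_pos_iff_support_of_nonneg (fun ω => (Real.exp_pos _).le) hfint]
    have hsupp : Function.support (fun ω => Real.exp (-θ * R 0 ω * T)) = Set.univ := by
      ext ω; simp [Function.support, Real.exp_ne_zero]
    rw [hsupp]
    simp
  have hc0 : 0 ≤ c := (Real.exp_pos _).le
  have hθT : 0 < θ * T := mul_pos hθ hT
  have hφc : φ * c ≤ 1 := by
    have h1 : V * (θ * T) ≤ -Real.log φ := by
      rw [← le_div_iff₀ hθT]; exact hstable
    have h3 : φ ≤ Real.exp (-(θ * V * T)) := by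
      rw [← Real.exp_log hφpos]
      apply Real.exp_le_exp.mpr
      nlinarith
    have h4 := mul_le_mul_of_nonneg_right h3 hc0
    rwa [hcdef, ← Real.exp_add, neg_add_cancel, Real.exp_zero] at h4
  -- the clamped product function over the tail block
  set g₀ : (↥(Finset.Ico i (i + k)) → ℝ) → ℝ :=
    fun v => ∏ t : ↥(Finset.Ico i (i + k)), max 0 (min (v t) 1) with hg₀def
  have hg₀m : Measurable g₀ :=
    Finset.measurable_prod Finset.univ
      (fun t _ => measurable_const.max ((measurable_pi_apply t).min measurable_const))
  have hg₀0 : ∀ v, 0 ≤ g₀ v := fun v =>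
    Finset.prod_nonneg fun t _ => le_max_left 0 _
  have hg₀1 : ∀ v, g₀ v ≤ 1 := fun v =>
    Finset.prod_le_one (fun t _ => le_max_left 0 _)
      (fun t _ => max_le zero_le_one (min_le_right _ _))
  have hg₀eval : ∀ ω, g₀ (fun t : ↥(Finset.Ico i (i + k)) => f t.1 ω)
      = ∏ t ∈ Finset.Ico i (i + k), f t ω := by
    intro ω
    simp only [hg₀def]
    calc ∏ t : ↥(Finset.Ico i (i + k)), max 0 (min (f t.1 ω) 1)
        = ∏ t : ↥(Finset.Ico i (i + k)), f t.1 ω :=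
          Finset.prod_congr rfl fun t _ => by
            rw [min_eq_left (hfle1 _ _), max_eq_right (hfpos _ _).le]
      _ = ∏ t ∈ Finset.Ico i (i + k), f t ω := Finset.prod_coe_sort (Finset.Ico i (i + k)) (fun n => f n ω)
  -- event inclusion
  have hincl : {ω | A 0 i > Astar (i + k) ω} ⊆ {ω | ∃ b, i - i ≤ b ∧ b ≤ i ∧
      1 ≤ g₀ (fun t : ↥(Finset.Ico i (i + k)) => f t.1 ω)
        * (c ^ (i - b) * ∏ t ∈ Finset.Ico b i, f t ω)} := by
    intro ω hω
    simp only [Set.mem_setOf_eq, gt_iff_lt] at hω ⊢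
    rw [hAstar, Finset.inf'_lt_iff] at hω
    obtain ⟨j, hjmem, hj⟩ := hω
    rw [hA, hA, hC] at hj
    push_cast at hj
    have hsum0 : 0 ≤ ∑ t ∈ Finset.Ico j (i + k), R t ω * T :=
      Finset.sum_nonneg fun t _ => mul_nonneg (hRnonneg t ω) hT.le
    have hji : j < i := by
      by_contra h
      push_neg at h
      have hcast : (i : ℝ) ≤ (j : ℝ) := Nat.cast_le.mpr h
      have hmul : V * (i : ℝ) * T ≤ V * (j : ℝ) * T :=
        mul_le_mul_of_nonneg_right (mul_le_mul_of_nonneg_left hcast hV.le) hT.le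
      nlinarith [hmul, hsum0, hj]
    refine ⟨j, by omega, hji.le, ?_⟩
    have hmerge : (∏ t ∈ Finset.Ico j i, f t ω) * ∏ t ∈ Finset.Ico i (i + k), f t ω
        = ∏ t ∈ Finset.Ico j (i + k), f t ω :=
      Finset.prod_Ico_consecutive _ hji.le (Nat.le_add_right i k)
    have hprodexp : ∏ t ∈ Finset.Ico j (i + k), f t ω
        = Real.exp (∑ t ∈ Finset.Ico j (i + k), (-θ * R t ω * T)) := by
      rw [Real.exp_sum]
    have hcpow : c ^ (i - j) = Real.exp (((i - j : ℕ) : ℝ) * (θ * V * T)) := by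
      rw [Real.exp_nat_mul, hcdef]
    have hcast : ((i - j : ℕ) : ℝ) = (i : ℝ) - (j : ℝ) := by
      rw [Nat.cast_sub hji.le]
    have htotal : g₀ (fun t : ↥(Finset.Ico i (i + k)) => f t.1 ω)
        * (c ^ (i - j) * ∏ t ∈ Finset.Ico j i, f t ω)
        = Real.exp (((i : ℝ) - (j : ℝ)) * (θ * V * T)
            + ∑ t ∈ Finset.Ico j (i + k), (-θ * R t ω * T)) := by
      rw [hg₀eval, Real.exp_add, ← hcast, ← hcpow, ← hprodexp, ← hmerge]
      ring
    rw [htotal]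
    have hsums : ∑ t ∈ Finset.Ico j (i + k), (-θ * R t ω * T)
        = -θ * ∑ t ∈ Finset.Ico j (i + k), R t ω * T := by
      rw [Finset.mul_sum]
      exact Finset.sum_congr rfl fun t _ => by ring
    have hs2 : ∑ t ∈ Finset.Ico j (i + k), R t ω * T < V * ((i : ℝ) - (j : ℝ)) * T := by
      nlinarith
    have harg : 0 ≤ ((i : ℝ) - (j : ℝ)) * (θ * V * T)
        + ∑ t ∈ Finset.Ico j (i + k), (-θ * R t ω * T) := by
      rw [hsums]
      nlinarith [mul_lt_mul_of_pos_left hs2 hθ]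
    calc (1 : ℝ) = Real.exp 0 := (Real.exp_zero).symm
      _ ≤ _ := Real.exp_le_exp.mpr harg
  -- put everything together
  calc (μ {ω | A 0 i > Astar (i + k) ω}).toReal
      ≤ (μ {ω | ∃ b, i - i ≤ b ∧ b ≤ i ∧
          1 ≤ g₀ (fun t : ↥(Finset.Ico i (i + k)) => f t.1 ω)
            * (c ^ (i - b) * ∏ t ∈ Finset.Ico b i, f t ω)}).toReal :=
        ENNReal.toReal_mono (measure_ne_top _ _) (measure_mono hincl)
    _ ≤ ∫ ω, g₀ (fun t : ↥(Finset.Ico i (i + k)) => f t.1 ω) ∂μ :=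
        ville_aux μ f hfmeas hfpos hfle1 hfind φ c hφt hc0 hφc (i + k) i i (le_refl i)
          (Nat.le_add_right i k) 1 g₀ hg₀m hg₀0 hg₀1
    _ = ∫ ω, ∏ t ∈ Finset.Ico i (i + k), f t ω ∂μ :=
        integral_congr_ae (Filter.Eventually.of_forall fun ω => hg₀eval ω)
    _ = φ ^ k := prod_integral_aux μ f hfmeas (fun t ω => (hfpos t ω).le) hfle1
        hfind φ hφt i k
end

section
/- Let N ≥ 1, let B > 0, and for each n = 1,…,N let f_n : [0,∞) → ℝ be continuous, strictly increasing, and satisfy f_n(0) = 0. Let S = { b ∈ ℝ^N : b_n ≥ 0 for all n and Σ_{n=1}^N b_n ≤ B }. If b* ∈ S maximizes min_{1≤n≤N} f_n(b_n) over S, i.e. min_n f_n(b*_n) ≥ min_n f_n(b_n) for every b ∈ S, then Σ_{n=1}^N b*_n = B and f_{n_1}(b*_{n_1}) = f_{n_2}(b*_{n_2}) for all n_1, n_2. -/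
/-- Theorem 2 of the paper: at any max-min optimal bandwidth allocation, the
total bandwidth is fully used and all users attain the same coding rate. -/
theorem maxmin_allocation_full_bandwidth_equal_rates
    (N : ℕ) (hN : 1 ≤ N) (B : ℝ) (hB : 0 < B)
    (f : Fin N → ℝ → ℝ)
    (hcont : ∀ n, ContinuousOn (f n) (Set.Ici 0))
    (hmono : ∀ n, StrictMonoOn (f n) (Set.Ici 0))
    (hzero : ∀ n, f n 0 = 0)
    (bstar : Fin N → ℝ)
    (hbstar_nonneg : ∀ n, 0 ≤ bstar n)
    (hbstar_sum : ∑ n, bstar n ≤ B)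
    (hopt : ∀ b : Fin N → ℝ, (∀ n, 0 ≤ b n) → ∑ n, b n ≤ B →
      Finset.univ.inf' (⟨⟨0, hN⟩, Finset.mem_univ _⟩ : (Finset.univ : Finset (Fin N)).Nonempty)
          (fun n => f n (b n)) ≤
        Finset.univ.inf' (⟨⟨0, hN⟩, Finset.mem_univ _⟩ : (Finset.univ : Finset (Fin N)).Nonempty)
          (fun n => f n (bstar n))) :
    (∑ n, bstar n = B) ∧ ∀ n₁ n₂ : Fin N, f n₁ (bstar n₁) = f n₂ (bstar n₂) := by
  have hne : (Finset.univ : Finset (Fin N)).Nonempty := ⟨⟨0, hN⟩, Finset.mem_univ _⟩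
  set K := Finset.univ.inf' hne (fun n => f n (bstar n)) with hKdef
  have hKle : ∀ n, K ≤ f n (bstar n) := fun n => Finset.inf'_le _ (Finset.mem_univ n)
  have hfnonneg : ∀ n, 0 ≤ f n (bstar n) := by
    intro n
    have := (hmono n).monotoneOn Set.self_mem_Ici
      (Set.mem_Ici.2 (hbstar_nonneg n)) (hbstar_nonneg n)
    rwa [hzero n] at this
  have hK0 : 0 ≤ K := Finset.le_inf' hne _ (fun n _ => hfnonneg n)
  have hNR : (0:ℝ) < N := by exact_mod_cast Nat.lt_of_lt_of_le Nat.zero_lt_one hN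
  -- key contradiction lemma
  have key : ∀ b : Fin N → ℝ, (∀ n, 0 ≤ b n) → ∑ n, b n ≤ B →
      (∀ n, K < f n (b n)) → False := by
    intro b h1 h2 h3
    have hle := hopt b h1 h2
    have h4 : K < Finset.univ.inf' hne (fun n => f n (b n)) :=
      (Finset.lt_inf'_iff hne).2 (fun n _ => h3 n)
    exact absurd hle (not_le.2 h4)
  have hsum : ∑ n, bstar n = B := by
    by_contra hne2
    have hlt : ∑ n, bstar n < B := lt_of_le_of_ne hbstar_sum hne2
    set c := (B - ∑ n, bstar n) / N with hc
    have hcpos : 0 < c := div_pos (by linarith) hNR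
    refine key (fun n => bstar n + c) (fun n => add_nonneg (hbstar_nonneg n) hcpos.le) ?_ ?_
    · have hS : ∑ n : Fin N, (bstar n + c) = (∑ n, bstar n) + N * c := by
        rw [Finset.sum_add_distrib, Finset.sum_const, Finset.card_univ, Fintype.card_fin,
          nsmul_eq_mul]
      rw [hS, hc, mul_div_cancel₀ _ (ne_of_gt hNR)]
      linarith
    · intro n
      have h1 : f n (bstar n) < f n (bstar n + c) :=
        (hmono n) (Set.mem_Ici.2 (hbstar_nonneg n))
          (Set.mem_Ici.2 (by linarith [hbstar_nonneg n])) (by linarith)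
      exact lt_of_le_of_lt (hKle n) h1
  have heq : ∀ n₁ n₂ : Fin N, f n₁ (bstar n₁) = f n₂ (bstar n₂) := by
    by_contra hne2
    push_neg at hne2
    obtain ⟨n₁, n₂, hne12⟩ := hne2
    obtain ⟨n0, -, hn0⟩ := Finset.exists_mem_eq_inf' hne (fun n => f n (bstar n))
    have hex : ∃ m, K < f m (bstar m) := by
      by_contra hall
      push_neg at hall
      have hall' : ∀ n, f n (bstar n) = K := fun n => le_antisymm (hall n) (hKle n)
      exact hne12 ((hall' n₁).trans (hall' n₂).symm)
    obtain ⟨m, hm⟩ := hex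
    have hm0 : 0 < bstar m := by
      rcases lt_or_eq_of_le (hbstar_nonneg m) with h | h
      · exact h
      · exfalso; rw [← h, hzero] at hm; exact absurd hm (not_lt.2 hK0)
    have hnm : n0 ≠ m := by
      rintro rfl; rw [← hn0] at hm; exact lt_irrefl _ hm
    have h1N : 1 < N := by
      have := Fintype.one_lt_card_iff_nontrivial.2 ⟨⟨n0, m, hnm⟩⟩
      simpa using this
    have hN1R : (0:ℝ) < (N:ℝ) - 1 := by
      have : (1:ℝ) < N := by exact_mod_cast h1N
      linarith
    -- continuity: find x < bstar m with K < f m x and 0 < x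
    have hcw : ContinuousWithinAt (f m) (Set.Ici 0) (bstar m) :=
      hcont m _ (Set.mem_Ici.2 (hbstar_nonneg m))
    have hnhds : nhdsWithin (bstar m) (Set.Ici 0) = nhds (bstar m) :=
      nhdsWithin_eq_nhds.2 (Ici_mem_nhds hm0)
    have ht : Filter.Tendsto (f m) (nhds (bstar m)) (nhds (f m (bstar m))) := by
      rw [← hnhds]; exact hcw
    have hev : ∀ᶠ x in nhds (bstar m), K < f m x ∧ 0 < x :=
      (ht.eventually (eventually_gt_nhds hm)).and (eventually_gt_nhds hm0)
    obtain ⟨x, hxlt, hxK, hx0⟩ := hev.exists_lt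
    set c := (bstar m - x) / ((N:ℝ) - 1) with hc
    have hcpos : 0 < c := div_pos (by linarith) hN1R
    set b := fun n => if n = m then x else bstar n + c with hb
    have hb0 : ∀ n, 0 ≤ b n := by
      intro n
      by_cases h : n = m
      · simp [hb, h, hx0.le]
      · simp only [hb, if_neg h]
        exact add_nonneg (hbstar_nonneg n) hcpos.le
    have hsum2 : ∑ n, b n = ∑ n, bstar n := by
      have h1 : ∑ n ∈ Finset.univ.erase m, b n
          = (∑ n ∈ Finset.univ.erase m, bstar n) + ((N:ℝ) - 1) * c := by
        rw [Finset.sum_congr rfl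
          (fun n hn => by simp [hb, (Finset.mem_erase.1 hn).1] : ∀ n ∈ Finset.univ.erase m,
            b n = bstar n + c)]
        rw [Finset.sum_add_distrib, Finset.sum_const,
          Finset.card_erase_of_mem (Finset.mem_univ m), Finset.card_univ, Fintype.card_fin,
          nsmul_eq_mul]
        congr 1
        push_cast [Nat.cast_sub hN]
        ring
      have h3 : ((N:ℝ) - 1) * c = bstar m - x := by
        rw [hc, mul_div_cancel₀ _ (ne_of_gt hN1R)]
      have h4 : ∑ n, b n = (∑ n ∈ Finset.univ.erase m, b n) + b m :=
        (Finset.sum_erase_add _ _ (Finset.mem_univ m)).symm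
      have h5 : ∑ n, bstar n = (∑ n ∈ Finset.univ.erase m, bstar n) + bstar m :=
        (Finset.sum_erase_add _ _ (Finset.mem_univ m)).symm
      have hbm : b m = x := by simp [hb]
      rw [h4, h5, h1, h3, hbm]
      ring
    refine key b hb0 (hsum2 ▸ hbstar_sum) ?_
    intro n
    by_cases h : n = m
    · subst h; simpa [hb] using hxK
    · have h1 : f n (bstar n) < f n (bstar n + c) :=
        (hmono n) (Set.mem_Ici.2 (hbstar_nonneg n))
          (Set.mem_Ici.2 (by linarith [hbstar_nonneg n])) (by linarith)
      have : b n = bstar n + c := by simp [hb, h]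
      rw [this]
      exact lt_of_le_of_lt (hKle n) h1
  exact ⟨hsum, heq⟩
end

section
/- Let θ > 0, T > 0 and c > 0, and let h be a nonnegative random variable with Pr{h > 0} > 0. Then the function B ↦ −(1/(θT)) · ln E[ exp( −θ T B log₂(1 + c·h/B) ) ] is strictly increasing on (0, ∞). -/
open MeasureTheory

private lemma rate_strictMono {a : ℝ} (ha : 0 < a) :
    StrictMonoOn (fun B : ℝ => B * Real.log (1 + a / B)) (Set.Ioi 0) := by
  have hderiv : ∀ B ∈ Set.Ioi (0:ℝ),
      HasDerivAt (fun B : ℝ => B * Real.log (1 + a / B))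
        (Real.log (1 + a / B) - a / (B + a)) B := by
    intro B hB
    have hB0 : (0:ℝ) < B := hB
    have h1 : (0:ℝ) < 1 + a / B := by positivity
    have hd1 : HasDerivAt (fun B : ℝ => 1 + a / B) (-(a / B ^ 2)) B := by
      have h' := ((hasDerivAt_inv hB0.ne').const_mul a).const_add 1
      simpa [div_eq_mul_inv, mul_comm, mul_assoc, neg_div] using h'
    have hd2 : HasDerivAt (fun B : ℝ => Real.log (1 + a / B))
        ((1 + a / B)⁻¹ * (-(a / B ^ 2))) B :=
      by have := (Real.hasDerivAt_log h1.ne').comp B hd1; exact this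
    have hd3 := (hasDerivAt_id B).mul hd2
    have heq : 1 * Real.log (1 + a / B) + B * ((1 + a / B)⁻¹ * (-(a / B ^ 2)))
        = Real.log (1 + a / B) - a / (B + a) := by
      have hBA : (0:ℝ) < B + a := by positivity
      field_simp
      ring
    exact heq ▸ hd3
  apply strictMonoOn_of_deriv_pos (convex_Ioi 0)
  · intro B hB
    exact ((hderiv B hB).continuousAt).continuousWithinAt
  · intro B hB
    rw [interior_Ioi] at hB
    rw [(hderiv B hB).deriv]
    have hB0 : (0:ℝ) < B := hB
    have hx : (0:ℝ) < a / B := by positivity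
    have h1x : (0:ℝ) < 1 + a / B := by positivity
    have hne : (1 + a / B)⁻¹ ≠ 1 := by
      intro hcontra
      rw [inv_eq_one] at hcontra
      linarith
    have hlog := Real.log_lt_sub_one_of_pos (inv_pos.mpr h1x) hne
    rw [Real.log_inv] at hlog
    have hkey : (a / B) / (1 + a / B) < Real.log (1 + a / B) := by
      have heq2 : (1 + a / B)⁻¹ - 1 = -((a / B) / (1 + a / B)) := by
        field_simp
        ring
      rw [heq2] at hlog
      linarith
    have hrewrite : (a / B) / (1 + a / B) = a / (B + a) := by
      rw [div_div]
      congr 1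
      field_simp
    rw [hrewrite] at hkey
    linarith

/-- The effective capacity `B ↦ -(1/(θT)) ln E[exp(-θ T B log₂(1 + c h / B))]`
is strictly increasing in the allocated bandwidth `B` on `(0, ∞)`. -/
theorem effective_capacity_strictMonoOn_bandwidth
    {Ω : Type*} [MeasurableSpace Ω] (μ : Measure Ω) [IsProbabilityMeasure μ]
    (θ T c : ℝ) (hθ : 0 < θ) (hT : 0 < T) (hc : 0 < c)
    (h : Ω → ℝ) (hmeas : Measurable h) (hnonneg : ∀ ω, 0 ≤ h ω)
    (hpos : 0 < μ {ω | 0 < h ω}) :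
    StrictMonoOn
      (fun B : ℝ =>
        -(1 / (θ * T)) *
          Real.log (∫ ω, Real.exp (-(θ * T * (B * Real.logb 2 (1 + c * h ω / B)))) ∂μ))
      (Set.Ioi 0) := by
  have hθT : (0:ℝ) < θ * T := mul_pos hθ hT
  set g : ℝ → Ω → ℝ := fun B ω =>
    Real.exp (-(θ * T * (B * Real.logb 2 (1 + c * h ω / B)))) with hg
  have hgpos : ∀ B ω, 0 < g B ω := fun B ω => Real.exp_pos _
  have hgle1 : ∀ B ∈ Set.Ioi (0:ℝ), ∀ ω, g B ω ≤ 1 := by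
    intro B hB ω
    have hB0 : (0:ℝ) < B := hB
    have h1 : (1:ℝ) ≤ 1 + c * h ω / B := by
      have h0 : 0 ≤ c * h ω / B := div_nonneg (mul_nonneg hc.le (hnonneg ω)) hB0.le
      linarith
    have hlogb : 0 ≤ Real.logb 2 (1 + c * h ω / B) :=
      Real.logb_nonneg one_lt_two h1
    have h0 : 0 ≤ θ * T * (B * Real.logb 2 (1 + c * h ω / B)) := mul_nonneg hθT.le (mul_nonneg hB0.le hlogb)
    calc g B ω ≤ Real.exp 0 := Real.exp_le_exp.mpr (by linarith)
      _ = 1 := Real.exp_zero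
  have hgmeas : ∀ B : ℝ, Measurable (g B) := by
    intro B
    apply Measurable.exp
    apply Measurable.neg
    apply Measurable.const_mul
    apply Measurable.const_mul
    unfold Real.logb
    exact (Real.measurable_log.comp (measurable_const.add ((hmeas.const_mul c).div_const B))).div_const _
  have hgint : ∀ B ∈ Set.Ioi (0:ℝ), Integrable (g B) μ := by
    intro B hB
    apply Integrable.mono' (integrable_const (1:ℝ)) (hgmeas B).aestronglyMeasurable
    filter_upwards with ω
    rw [Real.norm_eq_abs, abs_of_pos (hgpos B ω)]
    exact hgle1 B hB ω
  intro B₁ hB₁ B₂ hB₂ hlt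
  have hB₁0 : (0:ℝ) < B₁ := hB₁
  have hB₂0 : (0:ℝ) < B₂ := hB₂
  -- strict pointwise comparison where h ω > 0
  have hptlt : ∀ ω, 0 < h ω → g B₂ ω < g B₁ ω := by
    intro ω hωpos
    have ha : 0 < c * h ω := mul_pos hc hωpos
    have hmono := rate_strictMono ha hB₁ hB₂ hlt
    simp only at hmono
    have hlog2 : (0:ℝ) < Real.log 2 := Real.log_pos one_lt_two
    have hlogb : B₁ * Real.logb 2 (1 + c * h ω / B₁)
        < B₂ * Real.logb 2 (1 + c * h ω / B₂) := by
      unfold Real.logb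
      rw [mul_div_assoc', mul_div_assoc']
      gcongr
    exact Real.exp_lt_exp.mpr (by nlinarith)
  have hptle : ∀ ω, g B₂ ω ≤ g B₁ ω := by
    intro ω
    rcases eq_or_lt_of_le (hnonneg ω) with heq | hωpos
    · simp [hg, ← heq]
    · exact (hptlt ω hωpos).le
  have hint1 := hgint B₁ hB₁
  have hint2 := hgint B₂ hB₂
  have hdiffint : Integrable (fun ω => g B₁ ω - g B₂ ω) μ := hint1.sub hint2
  have hsup : {ω | 0 < h ω} ⊆ Function.support (fun ω => g B₁ ω - g B₂ ω) := by
    intro ω hω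
    have := hptlt ω hω
    simp only [Function.mem_support]
    intro hcontra
    have : g B₁ ω = g B₂ ω := by linarith [sub_eq_zero.mp hcontra]
    linarith
  have hintpos : 0 < ∫ ω, (g B₁ ω - g B₂ ω) ∂μ := by
    rw [integral_pos_iff_support_of_nonneg (fun ω => sub_nonneg.mpr (hptle ω)) hdiffint]
    exact lt_of_lt_of_le hpos (measure_mono hsup)
  rw [integral_sub hint1 hint2] at hintpos
  have hltint : ∫ ω, g B₂ ω ∂μ < ∫ ω, g B₁ ω ∂μ := by linarith
  have hpos2 : 0 < ∫ ω, g B₂ ω ∂μ := by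
    rw [integral_pos_iff_support_of_nonneg (fun ω => (hgpos B₂ ω).le) hint2]
    have : Function.support (g B₂) = Set.univ := by
      ext ω; simp [(hgpos B₂ ω).ne']
    rw [this]
    simp
  have hloglt := Real.log_lt_log hpos2 hltint
  have hneg : -(1 / (θ * T)) < 0 := by
    simp only [neg_neg, neg_lt, neg_zero]
    positivity
  show -(1 / (θ * T)) * Real.log (∫ ω, g B₁ ω ∂μ)
      < -(1 / (θ * T)) * Real.log (∫ ω, g B₂ ω ∂μ)
  exact mul_lt_mul_of_neg_left hloglt hneg
end
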